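/- Let S_a : [0, 1] → [0, 1] be defined by S_a(x) := 2x for 0 ≤ x ≤ 1/2 and S_a(x) := 1/x − 1 for 1/2 < x ≤ 1. Then the Borel measure on [0, 1] with density x ↦ 1/((1+x)·log 2) with respect to Lebesgue measure is an S_a-invariant probability measure: the pushforward of this measure under S_a equals itself. (Equivalently, the density φ(x) = 1/(1+x) satisfies the Ruelle equation φ(x) = (1/2)·φ(x/2) + (1/(1+x)²)·φ(1/(1+x)) for all x ∈ [0, 1].) -/

import Mathlib

open MeasureTheory

/-- The additive Hei-Chi Chan map: `S_a(x) = 2x` for `x ≤ 1/2` and `S_a(x) = 1/x − 1`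
for `x > 1/2`. -/
noncomputable def chanMap (x : ℝ) : ℝ :=
  if x ≤ 1 / 2 then 2 * x else 1 / x - 1

/-- The Gauss measure on `[0, 1]`: density `x ↦ 1/((1+x)·log 2)` w.r.t. Lebesgue
measure. -/
noncomputable def chanMeasure : Measure ℝ :=
  (volume.restrict (Set.Icc (0 : ℝ) 1)).withDensity
    (fun x => ENNReal.ofReal (1 / ((1 + x) * Real.log 2)))

lemma chanMap_measurable : Measurable chanMap := by
  unfold chanMap
  exact Measurable.ite (measurableSet_Iic (a := (1:ℝ)/2)) (by fun_prop) (by fun_prop)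

lemma log2_pos : (0:ℝ) < Real.log 2 := Real.log_pos (by norm_num)

lemma integral_dens (a b : ℝ) (ha : -1 < a) (hab : a ≤ b) :
    ∫ x in a..b, 1 / ((1 + x) * Real.log 2) =
      (Real.log (1 + b) - Real.log (1 + a)) / Real.log 2 := by
  have key : ∀ x ∈ Set.uIcc a b,
      HasDerivAt (fun y => Real.log (1 + y) / Real.log 2) (1 / ((1 + x) * Real.log 2)) x := by
    intro x hx
    rw [Set.uIcc_of_le hab] at hx
    have hx1 : (0:ℝ) < 1 + x := by linarith [hx.1]
    have h1 : HasDerivAt (fun y : ℝ => 1 + y) 1 x := (hasDerivAt_id x).const_add 1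
    have h2 := ((Real.hasDerivAt_log hx1.ne').comp x h1).div_const (Real.log 2)
    refine h2.congr_deriv ?_
    rw [one_div, mul_inv]; ring
  have hcont : IntervalIntegrable (fun x => 1 / ((1 + x) * Real.log 2)) volume a b := by
    apply ContinuousOn.intervalIntegrable
    apply continuousOn_const.div (by fun_prop)
    intro x hx
    rw [Set.uIcc_of_le hab] at hx
    have hx1 : (0:ℝ) < 1 + x := by linarith [hx.1]
    positivity
  rw [intervalIntegral.integral_eq_sub_of_hasDerivAt key hcont]
  ring

lemma lintegral_dens (a b : ℝ) (ha : -1 < a) (hab : a ≤ b) :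
    ∫⁻ x in Set.Icc a b, ENNReal.ofReal (1 / ((1 + x) * Real.log 2)) =
      ENNReal.ofReal ((Real.log (1 + b) - Real.log (1 + a)) / Real.log 2) := by
  rw [← Measure.restrict_congr_set Ioc_ae_eq_Icc]
  have hint : IntegrableOn (fun x => 1 / ((1 + x) * Real.log 2)) (Set.Ioc a b) volume := by
    have : IntervalIntegrable (fun x => 1 / ((1 + x) * Real.log 2)) volume a b := by
      apply ContinuousOn.intervalIntegrable
      apply continuousOn_const.div (by fun_prop)
      intro x hx
      rw [Set.uIcc_of_le hab] at hx
      have hx1 : (0:ℝ) < 1 + x := by linarith [hx.1]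
      positivity
    exact (intervalIntegrable_iff_integrableOn_Ioc_of_le hab).mp this
  have hnn : 0 ≤ᵐ[volume.restrict (Set.Ioc a b)] fun x => 1 / ((1 + x) * Real.log 2) := by
    filter_upwards [self_mem_ae_restrict measurableSet_Ioc] with x hx
    have hx1 : (0:ℝ) < 1 + x := by linarith [hx.1]
    positivity
  rw [← ofReal_integral_eq_lintegral_ofReal hint hnn,
    ← intervalIntegral.integral_of_le hab, integral_dens a b ha hab]

lemma chanMeasure_apply (A : Set ℝ) (hA : MeasurableSet A) :
    chanMeasure A = ∫⁻ x in A ∩ Set.Icc 0 1, ENNReal.ofReal (1 / ((1 + x) * Real.log 2)) := by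
  rw [chanMeasure, withDensity_apply _ hA, Measure.restrict_restrict hA]

/-- The Borel measure on `[0, 1]` with density `x ↦ 1/((1+x)·log 2)`
with respect to Lebesgue measure is an `S_a`-invariant probability measure for the
additive Hei-Chi Chan map `S_a(x) = 2x` (`x ≤ 1/2`), `1/x − 1` (`x > 1/2`): it is a
probability measure and its pushforward under `S_a` equals itself. -/
theorem stmt_19 :
    chanMeasure (Set.Icc (0 : ℝ) 1) = 1 ∧
    Measure.map chanMap chanMeasure = chanMeasure := by
  have hlog := log2_pos
  have hIcc : chanMeasure (Set.Icc (0 : ℝ) 1) = 1 := by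
    rw [chanMeasure_apply _ measurableSet_Icc, Set.inter_self,
      lintegral_dens 0 1 (by norm_num) (by norm_num)]
    norm_num
  have hprob : IsProbabilityMeasure chanMeasure := by
    constructor
    rw [chanMeasure_apply _ MeasurableSet.univ, Set.univ_inter,
      lintegral_dens 0 1 (by norm_num) (by norm_num)]
    norm_num
  refine ⟨hIcc, ?_⟩
  have : IsProbabilityMeasure (Measure.map chanMap chanMeasure) :=
    Measure.isProbabilityMeasure_map chanMap_measurable.aemeasurable
  refine Measure.ext_of_Iic _ _ (fun t => ?_)
  rw [Measure.map_apply chanMap_measurable measurableSet_Iic,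
    chanMeasure_apply _ (chanMap_measurable measurableSet_Iic),
    chanMeasure_apply _ measurableSet_Iic]
  rcases lt_or_ge t 0 with ht | ht
  · have h1 : chanMap ⁻¹' Set.Iic t ∩ Set.Icc 0 1 = ∅ := by
      ext x
      simp only [Set.mem_inter_iff, Set.mem_preimage, Set.mem_Iic, Set.mem_Icc,
        Set.mem_empty_iff_false, iff_false, not_and, chanMap]
      intro hmap hx0 hx1
      split_ifs at hmap with h
      · linarith
      · have hxpos : (0:ℝ) < x := by linarith
        have : 1 / x ≥ 1 := one_le_one_div hxpos hx1
        linarith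
    have h2 : Set.Iic t ∩ Set.Icc (0:ℝ) 1 = ∅ := by
      ext x
      simp only [Set.mem_inter_iff, Set.mem_Iic, Set.mem_Icc, Set.mem_empty_iff_false,
        iff_false, not_and]
      intro h h0 _; linarith
    rw [h1, h2]
  rcases le_or_gt 1 t with ht1 | ht1
  · have h1 : chanMap ⁻¹' Set.Iic t ∩ Set.Icc 0 1 = Set.Icc 0 1 := by
      apply Set.inter_eq_right.mpr
      rintro x ⟨hx0, hx1⟩
      simp only [Set.mem_preimage, Set.mem_Iic, chanMap]
      split_ifs with h
      · linarith
      · have hxpos : (0:ℝ) < x := by linarith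
        have : 1 / x ≤ 2 := by
          rw [div_le_iff₀ hxpos]; linarith
        linarith
    have h2 : Set.Iic t ∩ Set.Icc (0:ℝ) 1 = Set.Icc 0 1 := by
      apply Set.inter_eq_right.mpr
      rintro x ⟨_, hx1⟩
      exact le_trans hx1 ht1
    rw [h1, h2]
  · -- 0 ≤ t < 1
    have hpre : chanMap ⁻¹' Set.Iic t ∩ Set.Icc 0 1 =
        Set.Icc 0 (t / 2) ∪ Set.Icc (1 / (1 + t)) 1 := by
      ext x
      simp only [Set.mem_inter_iff, Set.mem_preimage, Set.mem_Iic, Set.mem_Icc,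
        Set.mem_union, chanMap]
      constructor
      · rintro ⟨hmap, hx0, hx1⟩
        split_ifs at hmap with h
        · exact Or.inl ⟨hx0, by linarith⟩
        · have hxpos : (0:ℝ) < x := by linarith
          refine Or.inr ⟨?_, hx1⟩
          rw [div_le_iff₀ (by linarith : (0:ℝ) < 1 + t)]
          have : 1 / x ≤ 1 + t := by linarith
          rw [div_le_iff₀ hxpos] at this
          linarith
      · rintro (⟨hx0, hxt⟩ | ⟨hxl, hx1⟩)
        · have hx12 : x ≤ 1 / 2 := by linarith
          refine ⟨?_, hx0, by linarith⟩
          rw [if_pos hx12]; linarith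
        · have hxpos : (0:ℝ) < x := by
            have : (0:ℝ) < 1 / (1 + t) := by positivity
            linarith
          have hcond : 1 / x - 1 ≤ t := by
            rw [div_le_iff₀ (by linarith : (0:ℝ) < 1 + t)] at hxl
            rw [sub_le_iff_le_add, div_le_iff₀ hxpos]
            linarith
          refine ⟨?_, le_of_lt hxpos, hx1⟩
          split_ifs with h
          · exfalso
            have : (1:ℝ)/2 < 1/(1+t) := by
              rw [div_lt_div_iff₀ (by norm_num) (by linarith)]; linarith
            linarith
          · exact hcond
    have hdisj : Disjoint (Set.Icc (0:ℝ) (t / 2)) (Set.Icc (1 / (1 + t)) 1) := by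
      rw [Set.disjoint_left]
      rintro x ⟨_, hx2⟩ ⟨hx3, _⟩
      have h1t : (0:ℝ) < 1 + t := by linarith
      have : (1:ℝ) / 2 < 1 / (1 + t) := by
        rw [div_lt_div_iff₀ (by norm_num) h1t]; linarith
      linarith
    have h2 : Set.Iic t ∩ Set.Icc (0:ℝ) 1 = Set.Icc 0 t := by
      ext x
      simp only [Set.mem_inter_iff, Set.mem_Iic, Set.mem_Icc]
      constructor
      · rintro ⟨h, h0, _⟩; exact ⟨h0, h⟩
      · rintro ⟨h0, h⟩; exact ⟨h, h0, by linarith⟩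
    rw [hpre, h2, lintegral_union measurableSet_Icc hdisj,
      lintegral_dens 0 (t/2) (by norm_num) (by linarith),
      lintegral_dens (1/(1+t)) 1 (by
        have : (0:ℝ) < 1/(1+t) := by positivity
        linarith) (by
        rw [div_le_one (by linarith : (0:ℝ) < 1 + t)]; linarith),
      lintegral_dens 0 t (by norm_num) ht]
    have h1t : (0:ℝ) < 1 + t := by linarith
    have hA : 0 ≤ (Real.log (1 + t/2) - Real.log (1 + 0)) / Real.log 2 := by
      apply div_nonneg _ hlog.le
      have : Real.log (1+0) ≤ Real.log (1 + t/2) := by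
        apply Real.log_le_log (by norm_num); linarith
      linarith
    have hB : 0 ≤ (Real.log (1 + 1) - Real.log (1 + 1/(1+t))) / Real.log 2 := by
      apply div_nonneg _ hlog.le
      have : Real.log (1 + 1/(1+t)) ≤ Real.log (1+1) := by
        apply Real.log_le_log (by positivity)
        have : 1 / (1+t) ≤ 1 := by rw [div_le_one h1t]; linarith
        linarith
      linarith
    rw [← ENNReal.ofReal_add hA hB]
    congr 1
    have e1 : (1:ℝ) + t/2 = (2 + t) / 2 := by ring
    have e2 : (1:ℝ) + 1/(1+t) = (2 + t) / (1 + t) := by field_simp; ring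
    rw [e1, e2, Real.log_div (by linarith) (by norm_num),
      Real.log_div (by linarith) h1t.ne']
    have : Real.log (1 + 0) = 0 := by norm_num
    rw [this]
    field_simp
    ring
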